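/- Let P be a finite set of points and S a finite set of closed intervals on the real line such that ⋃S ⊇ P. Then there exists a subset S* ⊆ S covering P, minimizing the maximum weighted membership over points of P, such that no interval of S* is strictly contained in the interior extent of another interval of S* (no interval [a,b] ∈ S* with [a',b'] ∈ S* satisfying a' < a and b < b'), and no point of the real line lies in more than two intervals of S*. -/
import Mathlib


open scoped Classical

/-- The maximum weighted membership value of a family `T` over points of `P`. -/
noncomputable def wval (P : Finset ℝ) (w : ℝ × ℝ → ℝ) (T : Finset (ℝ × ℝ)) : ℝ :=
  sSup ((fun p => ∑ s ∈ T.filter (fun s => p ∈ Set.Icc s.1 s.2), w s) '' ↑P)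

lemma wval_mono (P : Finset ℝ) (w : ℝ × ℝ → ℝ) {A B : Finset (ℝ × ℝ)}
    (hAB : A ⊆ B) (hw : ∀ s ∈ B, 0 ≤ w s) : wval P w A ≤ wval P w B := by
  classical
  rcases P.eq_empty_or_nonempty with rfl | hPne
  · simp [wval]
  · apply csSup_le (Set.Nonempty.image _ (Finset.coe_nonempty.2 hPne))
    rintro x ⟨p, hp, rfl⟩
    have hsum : (∑ s ∈ A.filter (fun s => p ∈ Set.Icc s.1 s.2), w s)
        ≤ ∑ s ∈ B.filter (fun s => p ∈ Set.Icc s.1 s.2), w s := by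
      apply Finset.sum_le_sum_of_subset_of_nonneg
        (Finset.filter_subset_filter _ hAB)
      intro s hs _
      exact hw s (Finset.mem_filter.1 hs).1
    refine le_trans hsum (le_csSup ?_ ⟨p, hp, rfl⟩)
    exact (P.finite_toSet.image _).bddAbove

/-- Among the covers of a finite point set `P` by weighted closed
intervals from `S` that minimize the maximum weighted membership over `P`, there
is one which is domination-free and in which every point of `ℝ` lies in at most
two intervals. Intervals are encoded by their endpoint pairs `s = (s.1, s.2)`
with `s.1 ≤ s.2`, and the interval is `Set.Icc s.1 s.2`. -/
theorem stmt7 (P : Finset ℝ) (S : Finset (ℝ × ℝ)) (w : ℝ × ℝ → ℝ)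
    (hint : ∀ s ∈ S, s.1 ≤ s.2)
    (hw : ∀ s ∈ S, 0 < w s)
    (hcov : ∀ p ∈ P, ∃ s ∈ S, p ∈ Set.Icc s.1 s.2) :
    ∃ Sstar ⊆ S,
      -- `Sstar` covers `P`
      (∀ p ∈ P, ∃ s ∈ Sstar, p ∈ Set.Icc s.1 s.2) ∧
      -- `Sstar` minimizes the maximum weighted membership over points of `P`
      (∀ S' ⊆ S, (∀ p ∈ P, ∃ s ∈ S', p ∈ Set.Icc s.1 s.2) →
        sSup ((fun p => ∑ s ∈ Sstar.filter (fun s => p ∈ Set.Icc s.1 s.2), w s) '' P)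
          ≤ sSup ((fun p => ∑ s ∈ S'.filter (fun s => p ∈ Set.Icc s.1 s.2), w s) '' P)) ∧
      -- no interval of `Sstar` is dominated by another interval of `Sstar`
      (¬ ∃ s ∈ Sstar, ∃ r ∈ Sstar, r.1 < s.1 ∧ s.2 < r.2) ∧
      -- no point of `ℝ` lies in more than two intervals of `Sstar`
      (∀ p : ℝ, (Sstar.filter (fun s => p ∈ Set.Icc s.1 s.2)).card ≤ 2) := by
  classical
  have hwnn : ∀ s ∈ S, 0 ≤ w s := fun s hs => (hw s hs).le
  -- the finite family of covers of `P` by subsets of `S`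
  set covers : Finset (Finset (ℝ × ℝ)) :=
    S.powerset.filter (fun T => ∀ p ∈ P, ∃ s ∈ T, p ∈ Set.Icc s.1 s.2) with hcovers
  have hmemcov : ∀ T : Finset (ℝ × ℝ), T ∈ covers ↔
      (T ⊆ S ∧ ∀ p ∈ P, ∃ s ∈ T, p ∈ Set.Icc s.1 s.2) := by
    intro T
    simp [hcovers, Finset.mem_powerset]
  have hScov : S ∈ covers := (hmemcov S).2 ⟨subset_rfl, hcov⟩
  -- a value-minimizing cover
  obtain ⟨T, hT, hTmin⟩ := covers.exists_min_image (wval P w) ⟨S, hScov⟩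
  -- among value-minimizing covers, one of minimal cardinality
  set covers2 : Finset (Finset (ℝ × ℝ)) :=
    covers.filter (fun U => wval P w U ≤ wval P w T) with hcovers2
  obtain ⟨Sstar, hst, hcardmin⟩ := covers2.exists_min_image Finset.card
    ⟨T, by simp [hcovers2, hT]⟩
  have hstc : Sstar ∈ covers := (Finset.mem_filter.1 hst).1
  have hstval : wval P w Sstar ≤ wval P w T := (Finset.mem_filter.1 hst).2
  have hstS : Sstar ⊆ S := ((hmemcov Sstar).1 hstc).1
  have hstcov : ∀ p ∈ P, ∃ s ∈ Sstar, p ∈ Set.Icc s.1 s.2 := ((hmemcov Sstar).1 hstc).2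
  -- no interval of `Sstar` can be removed while keeping a cover
  have key : ∀ t ∈ Sstar, ¬ (∀ p ∈ P, ∃ s ∈ Sstar.erase t, p ∈ Set.Icc s.1 s.2) := by
    intro t ht hcov'
    have hsub : Sstar.erase t ⊆ Sstar := Finset.erase_subset _ _
    have h1 : Sstar.erase t ∈ covers2 := by
      rw [hcovers2, Finset.mem_filter]
      refine ⟨(hmemcov _).2 ⟨hsub.trans hstS, hcov'⟩, ?_⟩
      exact le_trans (wval_mono P w hsub (fun s hs => hwnn s (hstS hs))) hstval
    have h2 := hcardmin _ h1
    have h3 : (Sstar.erase t).card < Sstar.card := Finset.card_erase_lt_of_mem ht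
    omega
  refine ⟨Sstar, hstS, hstcov, ?_, ?_, ?_⟩
  · -- optimality
    intro S' hS' hS'cov
    have hS'c : S' ∈ covers := (hmemcov S').2 ⟨hS', hS'cov⟩
    exact le_trans hstval (hTmin S' hS'c)
  · -- domination-free
    rintro ⟨s, hs, r, hr, h1, h2⟩
    apply key s hs
    intro p hp
    obtain ⟨t, htS, hpt⟩ := hstcov p hp
    by_cases hts : t = s
    · subst hts
      have hrs : r ≠ t := fun h => absurd h1 (by simp [h])
      exact ⟨r, Finset.mem_erase.2 ⟨hrs, hr⟩,
        ⟨le_trans h1.le hpt.1, le_trans hpt.2 h2.le⟩⟩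
    · exact ⟨t, Finset.mem_erase.2 ⟨hts, htS⟩, hpt⟩
  · -- at most two intervals through any point
    intro p
    by_contra hcard
    push_neg at hcard
    set F := Sstar.filter (fun s => p ∈ Set.Icc s.1 s.2) with hF
    have hFne : F.Nonempty := Finset.card_pos.1 (by omega)
    obtain ⟨u, hu, humin⟩ := F.exists_min_image (fun s => s.1) hFne
    obtain ⟨v, hv, hvmax⟩ := F.exists_max_image (fun s => s.2) hFne
    have hpu : p ∈ Set.Icc u.1 u.2 := (Finset.mem_filter.1 hu).2
    have hpv : p ∈ Set.Icc v.1 v.2 := (Finset.mem_filter.1 hv).2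
    have hthird : ∃ t ∈ F, t ≠ u ∧ t ≠ v := by
      by_contra hc
      push_neg at hc
      have hsub : F ⊆ {u, v} := by
        intro t htF
        rcases eq_or_ne t u with h | h
        · simp [h]
        · simp [hc t htF h]
      have := Finset.card_le_card hsub
      have h2 : ({u, v} : Finset (ℝ × ℝ)).card ≤ 2 := Finset.card_insert_le _ _ |>.trans (by simp)
      omega
    obtain ⟨t, htF, htu, htv⟩ := hthird
    have htS : t ∈ Sstar := (Finset.mem_filter.1 htF).1
    have hpt : p ∈ Set.Icc t.1 t.2 := (Finset.mem_filter.1 htF).2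
    apply key t htS
    intro q hq
    obtain ⟨t', ht', hqt'⟩ := hstcov q hq
    by_cases h' : t' = t
    · subst h'
      rcases le_total q p with hqp | hpq
      · exact ⟨u, Finset.mem_erase.2 ⟨fun h => htu h.symm, (Finset.mem_filter.1 hu).1⟩,
          ⟨le_trans (humin t' htF) hqt'.1, le_trans hqp hpu.2⟩⟩
      · exact ⟨v, Finset.mem_erase.2 ⟨fun h => htv h.symm, (Finset.mem_filter.1 hv).1⟩,
          ⟨le_trans hpv.1 hpq, le_trans hqt'.2 (hvmax t' htF)⟩⟩
    · exact ⟨t', Finset.mem_erase.2 ⟨h', ht'⟩, hqt'⟩
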